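/- For a pure bipartite state |ψ⟩ = ∑_i q_i |ψ_i⟩_A|ψ_i⟩_B with Schmidt coefficients q_i ≥ 0, ∑_i q_i² = 1, the maximal fidelity with maximally entangled states is (1/d)(∑_i q_i)²; equivalently, the entanglement deficiency of ρ = |ψ⟩⟨ψ| is D_g^E(ρ) = 1 − (1/d)(∑_i q_i)². -/

import Mathlib

open Matrix BigOperators ComplexOrder Kronecker

/-- A density operator: positive semidefinite with unit trace. -/
def IsDensity {n : Type*} [Fintype n] [DecidableEq n]
    (ρ : Matrix n n ℂ) : Prop :=
  ρ.PosSemidef ∧ ρ.trace = 1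

/-- An orthonormal family of vectors in `ℂ^d`. -/
def IsONB {d : ℕ} (a : Fin d → (Fin d → ℂ)) : Prop :=
  ∀ i j, star (a i) ⬝ᵥ a j = if i = j then 1 else 0

/-- The maximally entangled state vector `(1/√d) ∑ i |a i⟩|b i⟩`. -/
noncomputable def mePhi (d : ℕ) (a b : Fin d → (Fin d → ℂ)) :
    Fin d × Fin d → ℂ :=
  fun x => (((Real.sqrt d)⁻¹ : ℝ) : ℂ) * ∑ i, a i x.1 * b i x.2

/-- Maximal fidelity of `ρ` with maximally entangled states. -/
noncomputable def maxEntFid {d : ℕ}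
    (ρ : Matrix (Fin d × Fin d) (Fin d × Fin d) ℂ) : ℝ :=
  sSup {r : ℝ | ∃ a b : Fin d → (Fin d → ℂ), IsONB a ∧ IsONB b ∧
    r = (star (mePhi d a b) ⬝ᵥ ρ.mulVec (mePhi d a b)).re}

lemma onb_mat {d : ℕ} {a : Fin d → Fin d → ℂ} (ha : IsONB a) :
    (Matrix.of fun i x => (starRingEnd ℂ) (a i x))ᴴ *
      (Matrix.of fun i x => (starRingEnd ℂ) (a i x)) = 1 := by
  apply mul_eq_one_comm.mp
  ext i j
  have := ha i j
  simpa [Matrix.mul_apply, Matrix.conjTranspose_apply, Matrix.one_apply,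
    dotProduct] using this

lemma onb_parseval {d : ℕ} {a : Fin d → Fin d → ℂ} (ha : IsONB a) (v : Fin d → ℂ) :
    ∑ i, (starRingEnd ℂ) (star (a i) ⬝ᵥ v) * (star (a i) ⬝ᵥ v) = star v ⬝ᵥ v := by
  set A : Matrix (Fin d) (Fin d) ℂ := Matrix.of fun i x => (starRingEnd ℂ) (a i x) with hA
  have key : ∀ i, star (a i) ⬝ᵥ v = (A *ᵥ v) i := by
    intro i; simp [Matrix.mulVec, hA, dotProduct]
  calc ∑ i, (starRingEnd ℂ) (star (a i) ⬝ᵥ v) * (star (a i) ⬝ᵥ v)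
      = star (A *ᵥ v) ⬝ᵥ (A *ᵥ v) := by
        simp only [key]
        rfl
    _ = (star v ᵥ* Aᴴ) ⬝ᵥ (A *ᵥ v) := by rw [Matrix.star_mulVec]
    _ = ((star v ᵥ* Aᴴ) ᵥ* A) ⬝ᵥ v := by rw [Matrix.dotProduct_mulVec]
    _ = (star v ᵥ* (Aᴴ * A)) ⬝ᵥ v := by rw [Matrix.vecMul_vecMul]
    _ = star v ⬝ᵥ v := by rw [onb_mat ha, Matrix.vecMul_one]

-- sum of squared abs of coefficients of a unit vector against an ONB is 1
lemma onb_parseval_abs {d : ℕ} {a : Fin d → Fin d → ℂ} (ha : IsONB a)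
    {v : Fin d → ℂ} (hv : star v ⬝ᵥ v = 1) :
    ∑ i, ‖star (a i) ⬝ᵥ v‖ ^ 2 = 1 := by
  have h := onb_parseval ha v
  rw [hv] at h
  have : ((∑ i, ‖star (a i) ⬝ᵥ v‖ ^ 2 : ℝ) : ℂ) = 1 := by
    push_cast
    rw [← h]
    refine Finset.sum_congr rfl fun i _ => ?_
    rw [← Complex.ofReal_pow, Complex.sq_norm, Complex.normSq_eq_conj_mul_self]
  exact_mod_cast this

lemma inner_expand {d : ℕ} (q : Fin d → ℝ) (e f a b : Fin d → (Fin d → ℂ))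
    (ψ : Fin d × Fin d → ℂ) (hψ : ∀ x, ψ x = ∑ i, (q i : ℂ) * e i x.1 * f i x.2) :
    star (mePhi d a b) ⬝ᵥ ψ
      = (((Real.sqrt d)⁻¹ : ℝ) : ℂ) *
        ∑ j, (q j : ℂ) * ∑ i, (star (a i) ⬝ᵥ e j) * (star (b i) ⬝ᵥ f j) := by
  simp only [dotProduct, mePhi, Pi.star_apply, hψ, star_mul', star_sum,
    Complex.star_def, Complex.conj_ofReal, Finset.sum_mul, Finset.mul_sum,
    Fintype.sum_prod_type]
  have swap4 : ∀ (F : Fin d → Fin d → Fin d → Fin d → ℂ),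
      (∑ x1, ∑ x2, ∑ j, ∑ i, F x1 x2 j i) = ∑ j, ∑ i, ∑ x2, ∑ x1, F x1 x2 j i := by
    intro F
    trans ∑ x1, ∑ j, ∑ x2, ∑ i, F x1 x2 j i
    · exact Finset.sum_congr rfl fun _ _ => Finset.sum_comm
    trans ∑ j, ∑ x1, ∑ x2, ∑ i, F x1 x2 j i
    · exact Finset.sum_comm
    trans ∑ j, ∑ x1, ∑ i, ∑ x2, F x1 x2 j i
    · exact Finset.sum_congr rfl fun _ _ => Finset.sum_congr rfl fun _ _ => Finset.sum_comm
    trans ∑ j, ∑ i, ∑ x1, ∑ x2, F x1 x2 j i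
    · exact Finset.sum_congr rfl fun _ _ => Finset.sum_comm
    exact Finset.sum_congr rfl fun _ _ => Finset.sum_congr rfl fun _ _ => Finset.sum_comm
  rw [swap4]
  refine Finset.sum_congr rfl fun j _ => Finset.sum_congr rfl fun i _ =>
    Finset.sum_congr rfl fun y _ => Finset.sum_congr rfl fun x _ => by ring

lemma abs_S_le_one {d : ℕ} {a b e f : Fin d → (Fin d → ℂ)}
    (ha : IsONB a) (hb : IsONB b) (he : IsONB e) (hf : IsONB f) (j : Fin d) :
    ‖∑ i, (star (a i) ⬝ᵥ e j) * (star (b i) ⬝ᵥ f j)‖ ≤ 1 := by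
  have hU : ∑ i, ‖star (a i) ⬝ᵥ e j‖ ^ 2 = 1 :=
    onb_parseval_abs ha (by simpa using he j j)
  have hV : ∑ i, ‖star (b i) ⬝ᵥ f j‖ ^ 2 = 1 :=
    onb_parseval_abs hb (by simpa using hf j j)
  have h1 : ‖∑ i, (star (a i) ⬝ᵥ e j) * (star (b i) ⬝ᵥ f j)‖
      ≤ ∑ i, ‖star (a i) ⬝ᵥ e j‖ * ‖star (b i) ⬝ᵥ f j‖ := by
    refine (norm_sum_le _ _).trans ?_
    exact le_of_eq (Finset.sum_congr rfl fun i _ => norm_mul _ _)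
  refine h1.trans ?_
  have h2 := Finset.sum_mul_sq_le_sq_mul_sq Finset.univ
    (fun i => ‖star (a i) ⬝ᵥ e j‖) (fun i => ‖star (b i) ⬝ᵥ f j‖)
  rw [hU, hV, one_mul] at h2
  have h3 : (0:ℝ) ≤ ∑ i, ‖star (a i) ⬝ᵥ e j‖ * ‖star (b i) ⬝ᵥ f j‖ :=
    Finset.sum_nonneg fun i _ => mul_nonneg (norm_nonneg _) (norm_nonneg _)
  exact (pow_le_one_iff_of_nonneg h3 two_ne_zero).mp h2

lemma main_bound {d : ℕ} (q : Fin d → ℝ) (hq : ∀ i, 0 ≤ q i)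
    {e f a b : Fin d → (Fin d → ℂ)}
    (he : IsONB e) (hf : IsONB f) (ha : IsONB a) (hb : IsONB b)
    (ψ : Fin d × Fin d → ℂ) (hψ : ∀ x, ψ x = ∑ i, (q i : ℂ) * e i x.1 * f i x.2) :
    ‖star (mePhi d a b) ⬝ᵥ ψ‖ ^ 2 ≤ (d : ℝ)⁻¹ * (∑ i, q i) ^ 2 := by
  rw [inner_expand q e f a b ψ hψ, norm_mul, Complex.norm_real, Real.norm_eq_abs,
    abs_of_nonneg (inv_nonneg.2 (Real.sqrt_nonneg _))]
  have habs : ‖∑ j, (q j : ℂ) *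
      ∑ i, (star (a i) ⬝ᵥ e j) * (star (b i) ⬝ᵥ f j)‖ ≤ ∑ j, q j := by
    refine (norm_sum_le _ _).trans (Finset.sum_le_sum fun j _ => ?_)
    rw [norm_mul, Complex.norm_real, Real.norm_eq_abs, abs_of_nonneg (hq j)]
    calc q j * ‖∑ i, (star (a i) ⬝ᵥ e j) * (star (b i) ⬝ᵥ f j)‖
        ≤ q j * 1 := mul_le_mul_of_nonneg_left (abs_S_le_one ha hb he hf j) (hq j)
      _ = q j := mul_one _
  have hd2 : ((Real.sqrt d)⁻¹) ^ 2 = (d : ℝ)⁻¹ := by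
    rw [inv_pow, Real.sq_sqrt (Nat.cast_nonneg d)]
  calc ((Real.sqrt d)⁻¹ * ‖_‖) ^ 2
      = ((Real.sqrt d)⁻¹) ^ 2 * ‖_‖ ^ 2 := by ring
    _ ≤ ((Real.sqrt d)⁻¹) ^ 2 * (∑ j, q j) ^ 2 := by
        refine mul_le_mul_of_nonneg_left ?_ (sq_nonneg _)
        exact pow_le_pow_left₀ (norm_nonneg _) habs 2
    _ = (d : ℝ)⁻¹ * (∑ j, q j) ^ 2 := by rw [hd2]

lemma main_achieve {d : ℕ} (q : Fin d → ℝ) (hq : ∀ i, 0 ≤ q i)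
    {e f : Fin d → (Fin d → ℂ)} (he : IsONB e) (hf : IsONB f)
    (ψ : Fin d × Fin d → ℂ) (hψ : ∀ x, ψ x = ∑ i, (q i : ℂ) * e i x.1 * f i x.2) :
    ‖star (mePhi d e f) ⬝ᵥ ψ‖ ^ 2 = (d : ℝ)⁻¹ * (∑ i, q i) ^ 2 := by
  rw [inner_expand q e f e f ψ hψ]
  have hS : ∀ j, (∑ i, (star (e i) ⬝ᵥ e j) * (star (f i) ⬝ᵥ f j)) = 1 := by
    intro j
    rw [show (1 : ℂ) = ∑ i, if i = j then 1 else 0 by simp]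
    refine Finset.sum_congr rfl fun i _ => ?_
    rw [he i j, hf i j]
    by_cases h : i = j <;> simp [h]
  simp only [hS, mul_one]
  rw [norm_mul, Complex.norm_real, Real.norm_eq_abs, abs_of_nonneg (inv_nonneg.2 (Real.sqrt_nonneg _))]
  have : ‖∑ j, ((q j : ℝ) : ℂ)‖ = ∑ j, q j := by
    rw [← Complex.ofReal_sum, Complex.norm_real, Real.norm_eq_abs,
      abs_of_nonneg (Finset.sum_nonneg fun j _ => hq j)]
  rw [this, mul_pow, inv_pow, Real.sq_sqrt (Nat.cast_nonneg d)]

theorem stmt11 {d : ℕ} (hd : 0 < d)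
    (q : Fin d → ℝ) (hq : ∀ i, 0 ≤ q i) (hq2 : ∑ i, (q i) ^ 2 = 1)
    (e f : Fin d → (Fin d → ℂ)) (he : IsONB e) (hf : IsONB f)
    (ψ : Fin d × Fin d → ℂ)
    (hψ : ∀ x, ψ x = ∑ i, (q i : ℂ) * e i x.1 * f i x.2) :
    (sSup {r : ℝ | ∃ a b : Fin d → (Fin d → ℂ), IsONB a ∧ IsONB b ∧
        r = ‖star (mePhi d a b) ⬝ᵥ ψ‖ ^ 2}
      = (d : ℝ)⁻¹ * (∑ i, q i) ^ 2) ∧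
    (1 - sSup {r : ℝ | ∃ a b : Fin d → (Fin d → ℂ), IsONB a ∧ IsONB b ∧
        r = ‖star (mePhi d a b) ⬝ᵥ ψ‖ ^ 2}
      = 1 - (d : ℝ)⁻¹ * (∑ i, q i) ^ 2) := by
  set S := {r : ℝ | ∃ a b : Fin d → (Fin d → ℂ), IsONB a ∧ IsONB b ∧
      r = ‖star (mePhi d a b) ⬝ᵥ ψ‖ ^ 2} with hS
  have hmem : (d : ℝ)⁻¹ * (∑ i, q i) ^ 2 ∈ S :=
    ⟨e, f, he, hf, (main_achieve q hq he hf ψ hψ).symm⟩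
  have hub : ∀ r ∈ S, r ≤ (d : ℝ)⁻¹ * (∑ i, q i) ^ 2 := by
    rintro r ⟨a, b, ha, hb, rfl⟩
    exact main_bound q hq he hf ha hb ψ hψ
  have hsup : sSup S = (d : ℝ)⁻¹ * (∑ i, q i) ^ 2 :=
    le_antisymm (csSup_le (Set.nonempty_of_mem hmem) hub)
      (le_csSup ⟨_, hub⟩ hmem)
  exact ⟨hsup, by rw [hsup]⟩
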